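/- Let X be a finite set, m the uniform measure, c : X × X → ℝ≥0 symmetric, L the associated generator, ω > 0, γ : X → ℝ, and θ = (iω − L)^{−1}γ (assuming invertibility). Suppose there is a constant C with |⟨h, γ⟩_{L²(m)}| ≤ C ‖∇h‖_{L²(ν)} for all h : X → ℂ, where ‖∇h‖²_{L²(ν)} = (1/|X|)Σ_{x,y} c(x,y)|h(y)−h(x)|². Then ‖∇θ_R‖_{L²(ν)} ≤ 2C, ‖∇θ_I‖²_{L²(ν)} ≤ 4C², and ω‖θ‖²_{L²(m)} ≤ 2C². -/

import Mathlib

/-- A priori bounds on the solution `θ` of `(iω − L)θ = γ` under the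
Poincaré-type bound `|⟨h,γ⟩| ≤ C‖∇h‖`. -/
theorem stmt5 {X : Type*} [Fintype X] [Nonempty X]
    (c : X → X → ℝ) (hsym : ∀ x y, c x y = c y x) (hpos : ∀ x y, 0 ≤ c x y)
    (ω : ℝ) (hω : 0 < ω) (γ : X → ℝ) (θ : X → ℂ)
    (hθ : ∀ x, Complex.I * ω * θ x - ∑ y, (c x y : ℂ) * (θ y - θ x) = γ x)
    (C : ℝ) (hC : 0 ≤ C)
    (hbound : ∀ h : X → ℂ,
      ‖(∑ x, (starRingEnd ℂ) (h x) * γ x) / (Fintype.card X : ℂ)‖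
        ≤ C * Real.sqrt
            ((∑ x, ∑ y, c x y * ‖h y - h x‖ ^ 2) / (Fintype.card X : ℝ))) :
    Real.sqrt ((∑ x, ∑ y, c x y * ((θ y).re - (θ x).re) ^ 2) / (Fintype.card X : ℝ)) ≤ 2 * C
    ∧ (∑ x, ∑ y, c x y * ((θ y).im - (θ x).im) ^ 2) / (Fintype.card X : ℝ) ≤ 4 * C ^ 2
    ∧ ω * ((∑ x, ‖θ x‖ ^ 2) / (Fintype.card X : ℝ)) ≤ 2 * C ^ 2 := by
  classical
  set N : ℝ := (Fintype.card X : ℝ) with hNdef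
  have hN : 0 < N := by
    rw [hNdef]; exact_mod_cast Fintype.card_pos (α := X)
  set S : ℝ := ∑ x, ∑ y, c x y * ‖θ y - θ x‖ ^ 2 with hSdef
  set SR : ℝ := ∑ x, ∑ y, c x y * ((θ y).re - (θ x).re) ^ 2 with hSRdef
  set SI : ℝ := ∑ x, ∑ y, c x y * ((θ y).im - (θ x).im) ^ 2 with hSIdef
  set T : ℝ := ∑ x, ‖θ x‖ ^ 2 with hTdef
  set P : ℂ := ∑ x, (starRingEnd ℂ) (θ x) * (γ x : ℂ) with hPdef
  -- splitting of S
  have habs2 : ∀ x y : X, ‖θ y - θ x‖ ^ 2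
      = ((θ y).re - (θ x).re) ^ 2 + ((θ y).im - (θ x).im) ^ 2 := by
    intro x y
    rw [Complex.sq_norm, Complex.normSq_apply, Complex.sub_re, Complex.sub_im]; ring
  have hsplit : S = SR + SI := by
    rw [hSdef, hSRdef, hSIdef, ← Finset.sum_add_distrib]
    refine Finset.sum_congr rfl fun x _ => ?_
    rw [← Finset.sum_add_distrib]
    refine Finset.sum_congr rfl fun y _ => ?_
    rw [habs2]; ring
  have hSRnn : 0 ≤ SR := Finset.sum_nonneg fun x _ => Finset.sum_nonneg fun y _ =>
    mul_nonneg (hpos x y) (sq_nonneg _)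
  have hSInn : 0 ≤ SI := Finset.sum_nonneg fun x _ => Finset.sum_nonneg fun y _ =>
    mul_nonneg (hpos x y) (sq_nonneg _)
  have hSnn : 0 ≤ S := by rw [hsplit]; linarith
  have hTnn : 0 ≤ T := Finset.sum_nonneg fun x _ => sq_nonneg _
  -- compute P
  have hQ2 : (∑ x, ∑ y, (starRingEnd ℂ) (θ x) * ((c x y : ℂ) * (θ y - θ x)))
      + (∑ x, ∑ y, (starRingEnd ℂ) (θ x) * ((c x y : ℂ) * (θ y - θ x))) = -(S : ℂ) := by
    nth_rewrite 2 [Finset.sum_comm]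
    rw [← Finset.sum_add_distrib, hSdef]
    push_cast
    rw [← Finset.sum_neg_distrib]
    refine Finset.sum_congr rfl fun x _ => ?_
    rw [← Finset.sum_add_distrib, ← Finset.sum_neg_distrib]
    refine Finset.sum_congr rfl fun y _ => ?_
    have h1 : ((‖θ y - θ x‖ : ℂ)) ^ 2
        = (starRingEnd ℂ) (θ y - θ x) * (θ y - θ x) := by
      rw [← Complex.ofReal_pow, Complex.sq_norm, mul_comm, Complex.mul_conj]
    rw [hsym y x, h1]
    simp only [map_sub]
    ring
  have hP : P = ((S / 2 : ℝ) : ℂ) + Complex.I * ((ω * T : ℝ) : ℂ) := by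
    have hT' : ∑ x, (starRingEnd ℂ) (θ x) * θ x = ((T : ℝ) : ℂ) := by
      rw [hTdef]
      push_cast
      refine Finset.sum_congr rfl fun x _ => ?_
      rw [mul_comm, Complex.mul_conj]
      exact_mod_cast congrArg (Complex.ofReal) (Complex.sq_norm (θ x)).symm
    have step : P = Complex.I * (ω : ℂ) * (∑ x, (starRingEnd ℂ) (θ x) * θ x)
        - ∑ x, ∑ y, (starRingEnd ℂ) (θ x) * ((c x y : ℂ) * (θ y - θ x)) := by
      rw [hPdef, Finset.mul_sum, ← Finset.sum_sub_distrib]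
      refine Finset.sum_congr rfl fun x _ => ?_
      rw [← hθ x, ← Finset.mul_sum]
      ring
    rw [step, hT']
    have : (∑ x, ∑ y, (starRingEnd ℂ) (θ x) * ((c x y : ℂ) * (θ y - θ x)))
        = -(S : ℂ) / 2 := by
      linear_combination hQ2 / 2
    rw [this]
    push_cast
    ring
  have hre : P.re = S / 2 := by rw [hP]; simp
  have him : P.im = ω * T := by rw [hP]; simp
  -- the bound
  have hmain := hbound θ
  have habsP : ‖(∑ x, (starRingEnd ℂ) (θ x) * γ x) / (Fintype.card X : ℂ)‖
      = ‖P‖ / N := by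
    rw [norm_div, hPdef, hNdef, Complex.norm_natCast]
  rw [habsP] at hmain
  set a : ℝ := Real.sqrt (S / N) with hadef
  have ha : 0 ≤ a := Real.sqrt_nonneg _
  have ha2 : a ^ 2 = S / N := Real.sq_sqrt (by positivity)
  have hPre : S / 2 ≤ ‖P‖ := by
    rw [← hre]; exact le_trans (le_abs_self _) (Complex.abs_re_le_norm P)
  have hPim : ω * T ≤ ‖P‖ := by
    rw [← him]; exact le_trans (le_abs_self _) (Complex.abs_im_le_norm P)
  -- hmain : Complex.abs P / N ≤ C * a
  have hkey : a ^ 2 / 2 ≤ C * a := by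
    rw [ha2]
    calc S / N / 2 = (S / 2) / N := by ring
    _ ≤ ‖P‖ / N := by
        apply div_le_div_of_nonneg_right hPre hN.le |>.trans_eq rfl
    _ ≤ C * a := hmain
  have hale : a ≤ 2 * C := by
    rcases ha.eq_or_lt with h0 | h0
    · rw [← h0]; linarith
    · have : a * a ≤ (2 * C) * a := by nlinarith
      exact le_of_mul_le_mul_right this h0
  have haC : C * a ≤ 2 * C ^ 2 := by nlinarith
  refine ⟨?_, ?_, ?_⟩
  · have h1 : SR / N ≤ S / N := by
      apply div_le_div_of_nonneg_right (by linarith [hsplit.ge, hSInn]) hN.le |>.trans_eq rfl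
    calc Real.sqrt (SR / N) ≤ Real.sqrt (S / N) := Real.sqrt_le_sqrt h1
    _ ≤ 2 * C := hale
  · have h1 : SI / N ≤ S / N := by
      apply div_le_div_of_nonneg_right (by linarith [hsplit.ge, hSRnn]) hN.le |>.trans_eq rfl
    have : S / N ≤ 4 * C ^ 2 := by nlinarith [ha2]
    linarith
  · have h1 : ω * T / N ≤ ‖P‖ / N :=
      div_le_div_of_nonneg_right hPim hN.le |>.trans_eq rfl
    calc ω * (T / N) = ω * T / N := by ring
    _ ≤ ‖P‖ / N := h1
    _ ≤ C * a := hmain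
    _ ≤ 2 * C ^ 2 := haC
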